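/- At every point x ∈ ℝ^N all of whose blocks are nonzero (x^{(j)} ≠ 0 for j = 1,…,k), the homogeneous norm satisfies the Euler-type identity ∑_{i=1}^k σ_i ( x^{(i)} · ∇_{x^{(i)}} [[x]]_λ ) = [[x]]_λ, where · denotes the Euclidean inner product on ℝ^{N_i} and ∇_{x^{(i)}} the gradient in the variables of the i-th block. -/

import Mathlib

open MeasureTheory Finset

noncomputable section

/-- `ℝ^N = ℝ^{N_1} × ⋯ × ℝ^{N_k}` with the Euclidean norm. -/
abbrev Eb {k : ℕ} (N : Fin k → ℕ) : Type :=
  PiLp 2 (fun i : Fin k => EuclideanSpace ℝ (Fin (N i)))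

instance {k : ℕ} (N : Fin k → ℕ) : MeasurableSpace (Eb N) :=
  MeasurableSpace.comap WithLp.ofLp MeasurableSpace.pi
instance {k : ℕ} (N : Fin k → ℕ) : BorelSpace (Eb N) := PiLp.borelSpace 2

/-- `λ_i(x) = ∏_j |x^{(j)}|^{α_{ij}}`. -/
def lamF {k : ℕ} (N : Fin k → ℕ) (α : Fin k → Fin k → ℝ) (i : Fin k) (x : Eb N) : ℝ :=
  ∏ j : Fin k, ‖x j‖ ^ (α i j)

/-- the dilations `δ_r(x) = (r^{σ_1} x^{(1)}, …, r^{σ_k} x^{(k)})`. -/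
def dilF {k : ℕ} (N : Fin k → ℕ) (σ : Fin k → ℝ) (r : ℝ) (x : Eb N) : Eb N :=
  (WithLp.equiv 2 _).symm (fun i => (r ^ σ i) • x i)

/-- the homogeneous norm `[[x]]_λ`. -/
def hnormF {k : ℕ} (N : Fin k → ℕ) (α : Fin k → Fin k → ℝ) (σ : Fin k → ℝ) (x : Eb N) : ℝ :=
  (∑ j : Fin k, (∏ i ∈ Finset.univ.erase j, (lamF N α i x) ^ 2) * (σ j) ^ 2 * ‖x j‖ ^ 2)
    ^ (1 / (2 * (1 + ∑ i : Fin k, (σ i - 1))))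

/-- the homogeneous distance from the origin `‖x‖_λ`. -/
def dnormF {k : ℕ} (N : Fin k → ℕ) (σ : Fin k → ℝ) (x : Eb N) : ℝ :=
  (∑ j : Fin k, ‖x j‖ ^ (2 * ∏ i ∈ Finset.univ.erase j, σ i))
    ^ (1 / (2 * ∏ i : Fin k, σ i))

/-- `∇_λ u = (λ_1 ∇_{x^{(1)}} u, …, λ_k ∇_{x^{(k)}} u)`. -/
def lgradF {k : ℕ} (N : Fin k → ℕ) (α : Fin k → Fin k → ℝ) (u : Eb N → ℝ) (x : Eb N) : Eb N :=
  (WithLp.equiv 2 _).symm (fun i => lamF N α i x • (gradient u x) i)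

/-- the standard basis vector of `ℝ^N` in block `i`, coordinate `j`. -/
def basisVecF {k : ℕ} (N : Fin k → ℕ) (i : Fin k) (j : Fin (N i)) : Eb N :=
  (WithLp.equiv 2 _).symm (Pi.single i (EuclideanSpace.single j 1))

/-- `div_λ h = ∑_i λ_i div_{x^{(i)}} h^{(i)}`. -/
def divlamF {k : ℕ} (N : Fin k → ℕ) (α : Fin k → Fin k → ℝ) (h : Eb N → Eb N) (x : Eb N) : ℝ :=
  ∑ i : Fin k, lamF N α i x * ∑ j : Fin (N i), fderiv ℝ h x (basisVecF N i j) i j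

/-- `Δ_λ u = ∑_i λ_i^2 Δ_{x^{(i)}} u`. -/
def lapLamF {k : ℕ} (N : Fin k → ℕ) (α : Fin k → Fin k → ℝ) (u : Eb N → ℝ) (x : Eb N) : ℝ :=
  ∑ i : Fin k, (lamF N α i x) ^ 2 * ∑ j : Fin (N i),
    fderiv ℝ (fun y => fderiv ℝ u y (basisVecF N i j)) x (basisVecF N i j)

/-- the homogeneous dimension `Q = σ_1 N_1 + ⋯ + σ_k N_k`. -/
def QF {k : ℕ} (N : Fin k → ℕ) (σ : Fin k → ℝ) : ℝ :=
  ∑ i : Fin k, σ i * N i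

section Aux

private lemma diffAt_finprod {E : Type*} [NormedAddCommGroup E] [NormedSpace ℝ E]
    {ι : Type*} (s : Finset ι) (f : ι → E → ℝ) (x : E)
    (h : ∀ i ∈ s, DifferentiableAt ℝ (f i) x) :
    DifferentiableAt ℝ (fun y => ∏ i ∈ s, f i y) x := by
  classical
  induction s using Finset.induction with
  | empty => simp [differentiableAt_const]
  | @insert a s ha ih =>
    simp only [Finset.prod_insert ha]
    exact (h a (Finset.mem_insert_self a s)).mul
      (ih fun i hi => h i (Finset.mem_insert_of_mem hi))

end Aux

/-- the Euler-type identity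
`∑_i σ_i (x^{(i)} · ∇_{x^{(i)}} [[x]]_λ) = [[x]]_λ` at every point all of whose blocks are
nonzero. -/
theorem hnorm_euler_identity {k : ℕ} (hk : 0 < k)
    (N : Fin k → ℕ) (hN : ∀ i, 1 ≤ N i)
    (α : Fin k → Fin k → ℝ) (σ : Fin k → ℝ)
    (hα : ∀ i j, 0 ≤ α i j) (hα0 : ∀ i j : Fin k, i ≤ j → α i j = 0)
    (hσ : ∀ i, σ i = 1 + ∑ j : Fin k, if j < i then σ j * α i j else 0)
    (x : Eb N) (hx : ∀ j, x j ≠ 0) :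
    ∑ i : Fin k, σ i * (inner ℝ (x i) ((gradient (hnormF N α σ) x) i) : ℝ) =
      hnormF N α σ x := by
  classical
  have hkne : Nonempty (Fin k) := ⟨⟨0, hk⟩⟩
  -- σ i ≥ 1
  have hσ1 : ∀ i : Fin k, 1 ≤ σ i := by
    have key : ∀ n : ℕ, ∀ i : Fin k, (i : ℕ) ≤ n → 1 ≤ σ i := by
      intro n
      induction n with
      | zero =>
        intro i hi
        rw [hσ i]
        have h0 : ∀ j : Fin k, (if j < i then σ j * α i j else 0) = 0 := by
          intro j
          rw [if_neg]
          intro h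
          exact absurd (lt_of_lt_of_le (Fin.lt_iff_val_lt_val.mp h) hi) (Nat.not_lt_zero _)
        simp [h0]
      | succ n ih =>
        intro i hi
        rw [hσ i]
        have h0 : 0 ≤ ∑ j : Fin k, (if j < i then σ j * α i j else 0) := by
          apply Finset.sum_nonneg
          intro j _
          by_cases h : j < i
          · rw [if_pos h]
            have hj : 1 ≤ σ j := by
              apply ih
              have := Fin.lt_iff_val_lt_val.mp h
              omega
            exact mul_nonneg (by linarith) (hα i j)
          · rw [if_neg h]
        linarith
    exact fun i => key k i i.isLt.le
  have hnx : ∀ j, 0 < ‖x j‖ := fun j => norm_pos_iff.mpr (hx j)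
  -- exponent bookkeeping
  set d : ℝ := 2 * (1 + ∑ i : Fin k, (σ i - 1)) with hd_def
  have hT : 0 ≤ ∑ i : Fin k, (σ i - 1) :=
    Finset.sum_nonneg fun i _ => by linarith [hσ1 i]
  have hd_pos : 0 < d := by rw [hd_def]; positivity
  have hd0 : d ≠ 0 := ne_of_gt hd_pos
  have hexp : ∀ i : Fin k, ∑ j : Fin k, σ j * α i j = σ i - 1 := by
    intro i
    have h1 : ∑ j : Fin k, (if j < i then σ j * α i j else 0) = ∑ j : Fin k, σ j * α i j := by
      apply Finset.sum_congr rfl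
      intro j _
      by_cases h : j < i
      · rw [if_pos h]
      · rw [if_neg h, hα0 i j (not_lt.mp h), mul_zero]
    have := hσ i
    rw [h1] at this
    linarith
  -- define S
  set S : Eb N → ℝ := fun y =>
    ∑ j : Fin k, (∏ i ∈ Finset.univ.erase j, (lamF N α i y) ^ 2) * (σ j) ^ 2 * ‖y j‖ ^ 2
    with hS_def
  have hnormF_eq : ∀ y : Eb N, hnormF N α σ y = (S y) ^ (1 / d) := fun y => rfl
  have hlam_pos : ∀ (i : Fin k) (y : Eb N), (∀ j, 0 < ‖y j‖) → 0 < lamF N α i y := by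
    intro i y hy
    exact Finset.prod_pos fun j _ => Real.rpow_pos_of_pos (hy j) _
  have hS_pos : 0 < S x := by
    apply Finset.sum_pos
    · intro j _
      apply mul_pos (mul_pos _ _)
      · exact pow_pos (hnx j) 2
      · exact Finset.prod_pos fun i _ => pow_pos (hlam_pos i x hnx) 2
      · exact pow_pos (by linarith [hσ1 j]) 2
    · exact Finset.univ_nonempty
  -- block norms of the dilation
  have hdil_app : ∀ (r : ℝ) (j : Fin k), (dilF N σ r x) j = (r ^ σ j) • x j := fun r j => rfl
  have hdil_norm : ∀ (r : ℝ), 0 < r → ∀ j : Fin k,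
      ‖(dilF N σ r x) j‖ = r ^ σ j * ‖x j‖ := by
    intro r hr j
    rw [hdil_app, norm_smul, Real.norm_eq_abs, abs_of_pos (Real.rpow_pos_of_pos hr _)]
  -- λ under dilation
  have hlam_dil : ∀ (r : ℝ), 0 < r → ∀ i : Fin k,
      lamF N α i (dilF N σ r x) = r ^ (σ i - 1) * lamF N α i x := by
    intro r hr i
    unfold lamF
    have h1 : ∀ j : Fin k, ‖dilF N σ r x j‖ ^ (α i j)
        = r ^ (σ j * α i j) * ‖x j‖ ^ (α i j) := by
      intro j
      rw [hdil_norm r hr j,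
        Real.mul_rpow (le_of_lt (Real.rpow_pos_of_pos hr _)) (norm_nonneg _),
        ← Real.rpow_mul hr.le]
    rw [Finset.prod_congr rfl (fun j _ => h1 j), Finset.prod_mul_distrib,
      ← Real.rpow_sum_of_pos hr, hexp i]
  -- squares of rpow
  have hsq : ∀ (r : ℝ), 0 < r → ∀ c : ℝ, (r ^ c) ^ 2 = r ^ (2 * c) := by
    intro r hr c
    rw [← Real.rpow_natCast (r ^ c) 2, ← Real.rpow_mul hr.le]
    norm_num [mul_comm]
  -- homogeneity of S
  have hS_hom : ∀ (r : ℝ), 0 < r → S (dilF N σ r x) = r ^ d * S x := by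
    intro r hr
    rw [hS_def]
    simp only
    rw [Finset.mul_sum]
    apply Finset.sum_congr rfl
    intro j _
    have h1 : ∏ i ∈ Finset.univ.erase j, (lamF N α i (dilF N σ r x)) ^ 2
        = r ^ (∑ i ∈ Finset.univ.erase j, 2 * (σ i - 1))
          * ∏ i ∈ Finset.univ.erase j, (lamF N α i x) ^ 2 := by
      rw [Real.rpow_sum_of_pos hr, ← Finset.prod_mul_distrib]
      apply Finset.prod_congr rfl
      intro i _
      rw [hlam_dil r hr i, mul_pow, hsq r hr]
    have h2 : ‖dilF N σ r x j‖ ^ 2 = r ^ (2 * σ j) * ‖x j‖ ^ 2 := by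
      rw [hdil_norm r hr j, mul_pow, hsq r hr]
    have hAB : (∑ i ∈ Finset.univ.erase j, 2 * (σ i - 1)) + 2 * σ j = d := by
      have he : (∑ i ∈ Finset.univ.erase j, 2 * (σ i - 1)) + 2 * (σ j - 1)
          = ∑ i : Fin k, 2 * (σ i - 1) := by
        simpa using Finset.sum_erase_add Finset.univ (fun i => 2 * (σ i - 1)) (Finset.mem_univ j)
      have hms : ∑ i : Fin k, 2 * (σ i - 1) = 2 * ∑ i : Fin k, (σ i - 1) := by
        rw [Finset.mul_sum]
      rw [hd_def]
      rw [hms] at he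
      linarith
    calc (∏ i ∈ Finset.univ.erase j, (lamF N α i (dilF N σ r x)) ^ 2) * σ j ^ 2
          * ‖dilF N σ r x j‖ ^ 2
        = (r ^ (∑ i ∈ Finset.univ.erase j, 2 * (σ i - 1)) * r ^ (2 * σ j))
          * ((∏ i ∈ Finset.univ.erase j, (lamF N α i x) ^ 2) * σ j ^ 2 * ‖x j‖ ^ 2) := by
          rw [h1, h2]; ring
      _ = r ^ d * ((∏ i ∈ Finset.univ.erase j, (lamF N α i x) ^ 2) * σ j ^ 2 * ‖x j‖ ^ 2) := by
          rw [← Real.rpow_add hr, hAB]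
  -- homogeneity of the norm
  have hhom : ∀ (r : ℝ), 0 < r → hnormF N α σ (dilF N σ r x) = r * hnormF N α σ x := by
    intro r hr
    rw [hnormF_eq, hnormF_eq, hS_hom r hr,
      Real.mul_rpow (le_of_lt (Real.rpow_pos_of_pos hr _)) hS_pos.le,
      ← Real.rpow_mul hr.le, mul_one_div, div_self hd0, Real.rpow_one]
  -- differentiability
  have hproj : ∀ j : Fin k, DifferentiableAt ℝ (fun y : Eb N => y j) x := by
    intro j
    exact (PiLp.proj (𝕜 := ℝ) 2 (fun i => EuclideanSpace ℝ (Fin (N i))) j).differentiableAt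
  have hnj : ∀ j : Fin k, DifferentiableAt ℝ (fun y : Eb N => ‖y j‖) x := by
    intro j
    exact (hproj j).norm ℝ (hx j)
  have hlam_diff : ∀ i : Fin k, DifferentiableAt ℝ (lamF N α i) x := by
    intro i
    unfold lamF
    exact diffAt_finprod _ _ _ fun j _ =>
      (hnj j).rpow_const (Or.inl (ne_of_gt (hnx j)))
  have hS_diff : DifferentiableAt ℝ S x := by
    rw [hS_def]
    apply DifferentiableAt.fun_sum
    intro j _
    exact (((diffAt_finprod _ _ _ fun i _ => (hlam_diff i).pow 2).mul
      (differentiableAt_const _))).mul ((hnj j).pow 2)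
  have hH_diff : DifferentiableAt ℝ (hnormF N α σ) x := by
    have : DifferentiableAt ℝ (fun y => (S y) ^ (1 / d)) x :=
      hS_diff.rpow_const (Or.inl (ne_of_gt hS_pos))
    exact this
  -- the Euler vector field
  set v : Eb N := (WithLp.equiv 2 _).symm (fun i => σ i • x i) with hv_def
  -- derivative of the dilation curve at r = 1
  have hc : HasDerivAt (fun r : ℝ => dilF N σ r x) v 1 := by
    have hg' : HasDerivAt (fun r : ℝ => fun i : Fin k => r ^ σ i • x i)
        (fun i : Fin k => σ i • x i) 1 := by
      apply hasDerivAt_pi.mpr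
      intro i
      have h1 : HasDerivAt (fun r : ℝ => r ^ σ i) (σ i) 1 := by
        have := Real.hasDerivAt_rpow_const (x := (1 : ℝ)) (p := σ i) (Or.inl one_ne_zero)
        simpa using this
      exact h1.smul_const (x i)
    have he := ((PiLp.continuousLinearEquiv 2 ℝ
      (fun i : Fin k => EuclideanSpace ℝ (Fin (N i)))).symm.hasFDerivAt).comp_hasDerivAt 1 hg'
    exact he
  have hdil_one : dilF N σ 1 x = x := by
    refine PiLp.ext fun i => ?_
    show ((1 : ℝ) ^ σ i) • x i = x i
    rw [Real.one_rpow, one_smul]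
  -- chain rule
  have hDer1 : HasDerivAt (fun r : ℝ => hnormF N α σ (dilF N σ r x))
      (fderiv ℝ (hnormF N α σ) x v) 1 := by
    have hf : HasFDerivAt (hnormF N α σ) (fderiv ℝ (hnormF N α σ) x) (dilF N σ 1 x) := by
      rw [hdil_one]; exact hH_diff.hasFDerivAt
    exact hf.comp_hasDerivAt 1 hc
  have hDer2 : HasDerivAt (fun r : ℝ => hnormF N α σ (dilF N σ r x)) (hnormF N α σ x) 1 := by
    have h1 : HasDerivAt (fun r : ℝ => r * hnormF N α σ x) (hnormF N α σ x) 1 := by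
      simpa using (hasDerivAt_id (1 : ℝ)).mul_const (hnormF N α σ x)
    apply h1.congr_of_eventuallyEq
    filter_upwards [eventually_gt_nhds (zero_lt_one (α := ℝ))] with r hr
    exact hhom r hr
  have hfv : fderiv ℝ (hnormF N α σ) x v = hnormF N α σ x := hDer1.unique hDer2
  -- gradient pairing
  have hgrad : (inner ℝ (gradient (hnormF N α σ) x) v : ℝ) = fderiv ℝ (hnormF N α σ) x v := by
    rw [gradient]
    exact InnerProductSpace.toDual_symm_apply
  have hsum : ∑ i : Fin k, σ i * (inner ℝ (x i) ((gradient (hnormF N α σ) x) i) : ℝ)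
      = (inner ℝ (gradient (hnormF N α σ) x) v : ℝ) := by
    rw [PiLp.inner_apply]
    apply Finset.sum_congr rfl
    intro i _
    have hvi : v i = σ i • x i := rfl
    rw [hvi, real_inner_smul_right, real_inner_comm]
  rw [hsum, hgrad, hfv]


end
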